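/- Fix natural numbers s ≥ 1, r, and m with r + 1 ≤ m. Let J_1, …, J_s be finsets of Fin m satisfying |J_1| + ⋯ + |J_s| = r + 1. Then there exist a permutation g ∈ Equiv.Perm (Fin m) and finsets J'_1, …, J'_s of Fin m such that J'_t.image g = J_t for every t and every element x of every J'_t satisfies (x : ℕ) < r + 1. (This is the complete surjectivity of the consistent sequence of joins of skeleta of simplices: every collection of r + 1 vertices of the m-th complex is, up to the symmetric group action, the image of a collection of vertices supported on the first r + 1 coordinates.) -/

import Mathlib

/-- For `s ≥ 1`, `r + 1 ≤ m` and finsets `J_1, …, J_s` of `Fin m` with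
`|J_1| + ⋯ + |J_s| = r + 1`, there exist a permutation `g ∈ Perm (Fin m)` and finsets
`J'_1, …, J'_s` with `J'_t.image g = J_t` for every `t` and every element of every
`J'_t` lying among the first `r + 1` coordinates. (Complete surjectivity of the
consistent sequence of joins of skeleta of simplices.) -/
theorem stmt_13 {s r m : ℕ} (hs : 1 ≤ s) (hrm : r + 1 ≤ m)
    (J : Fin s → Finset (Fin m))
    (hcard : ∑ t : Fin s, (J t).card = r + 1) :
    ∃ (g : Equiv.Perm (Fin m)) (J' : Fin s → Finset (Fin m)),
      (∀ t, (J' t).image ⇑g = J t) ∧ ∀ t, ∀ x ∈ J' t, (x : ℕ) < r + 1 := by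
  classical
  set U : Finset (Fin m) := Finset.univ.biUnion J with hU
  have hUcard : U.card ≤ r + 1 := by
    calc U.card ≤ ∑ t : Fin s, (J t).card := Finset.card_biUnion_le
    _ = r + 1 := hcard
  obtain ⟨V, hUV, hVcard⟩ := Finset.exists_superset_card_eq hUcard
    (by simpa using hrm)
  set T : Finset (Fin m) := Finset.univ.filter (fun x => (x : ℕ) < r + 1) with hT
  have hTcard : T.card = r + 1 := by
    rw [hT, Finset.card_filter, Fin.sum_univ_eq_sum_range (fun i => if i < r + 1 then 1 else 0),
      ← Finset.card_filter]
    have : (Finset.range m).filter (fun i => i < r + 1) = Finset.range (r + 1) := by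
      ext i; simp; omega
    rw [this, Finset.card_range]
  have e : {x : Fin m // x ∈ T} ≃ {x : Fin m // x ∈ V} :=
    Finset.equivOfCardEq (hTcard.trans hVcard.symm)
  let g : Equiv.Perm (Fin m) := Equiv.extendSubtype e
  refine ⟨g, fun t => (J t).image g.symm, fun t => ?_, fun t x hx => ?_⟩
  · rw [Finset.image_image]
    simp
  · simp only [Finset.mem_image] at hx
    obtain ⟨y, hy, rfl⟩ := hx
    have hyV : y ∈ V := hUV (Finset.mem_biUnion.2 ⟨t, Finset.mem_univ t, hy⟩)
    by_contra hlt
    have hnT : ¬ ((g.symm y : ℕ) < r + 1) := hlt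
    have h2 : ¬ (g (g.symm y)) ∈ V :=
      Equiv.extendSubtype_not_mem e (g.symm y) (by simp [hT, hnT]; omega)
    rw [Equiv.apply_symm_apply] at h2
    exact h2 hyV
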